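/- In the setting of the projection onto safe forests: for every scale assignment n, the map P^n satisfies P^n ∘ P^n = P^n. -/

import Mathlib

variable {V ε : Type*}

/-- `ℰ^int(S)`: edges with all endpoints in the node set `S`. -/
def Eint (inc : ε → Set V) (S : Set V) : Set ε := {e | inc e ⊆ S}

/-- `ℰ^ext(S)`: edges touching but not inside `S`. -/
def Eext (inc : ε → Set V) (S : Set V) : Set ε :=
  {e | ¬ inc e ⊆ S ∧ (inc e ∩ S).Nonempty}

/-- `C_ℱ(S)`: the maximal elements of `ℱ` strictly contained in `S`. -/
def childrenF (F : Set (Set V)) (S : Set V) : Set (Set V) :=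
  {T | T ∈ F ∧ T ⊂ S ∧ ∀ U ∈ F, T ⊂ U → ¬ U ⊂ S}

/-- `ℰ^int_ℱ(S) = ℰ^int(S) \ ⋃_{T ∈ C_ℱ(S)} ℰ^int(T)`. -/
def EintF (inc : ε → Set V) (F : Set (Set V)) (S : Set V) : Set ε :=
  Eint inc S \ ⋃ T ∈ childrenF F S, Eint inc T

/-- `ℰ^ext_ℱ(S) = ℰ^ext(S) ∩ ℰ^int(A_ℱ(S))`, where `A_ℱ(S)` is the minimal element of
`ℱ` strictly containing `S` (the intersection over all strict supersets in `ℱ`,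
which for a laminar finite family equals `ℰ^int` of the immediate ancestor, and is
everything when there is no ancestor). -/
def EextF (inc : ε → Set V) (F : Set (Set V)) (S : Set V) : Set ε :=
  Eext inc S ∩ ⋂ T ∈ {T | T ∈ F ∧ S ⊂ T}, Eint inc T

/-- `int^n_ℱ(S)`: the minimum scale over internal edges modulo `ℱ`. -/
noncomputable def intScale (inc : ε → Set V) (n : ε → ℕ) (F : Set (Set V))
    (S : Set V) : ℕ :=
  sInf (n '' EintF inc F S)

/-- `ext^n_ℱ(S)`: the maximum scale over external edges modulo `ℱ`. -/
noncomputable def extScale (inc : ε → Set V) (n : ε → ℕ) (F : Set (Set V))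
    (S : Set V) : ℕ :=
  sSup (n '' EextF inc F S)

/-- `P^n[ℱ]`: the projection onto safe forests. -/
noncomputable def safeProj (inc : ε → Set V) (n : ε → ℕ) (F : Set (Set V)) :
    Set (Set V) :=
  {S ∈ F | intScale inc n F S ≤ extScale inc n F S}


/-- Every strict subset of `S` in a finite family `F` is contained in a child of `S`. -/
lemma exists_child {F : Set (Set V)} (hFfin : F.Finite) {S T : Set V}
    (hT : T ∈ F) (hTS : T ⊂ S) : ∃ U ∈ childrenF F S, T ⊆ U := by
  have hs : ({U | U ∈ F ∧ T ⊆ U ∧ U ⊂ S} : Set (Set V)).Finite :=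
    hFfin.subset (fun U hU => hU.1)
  obtain ⟨U, hUs, hmax⟩ := Set.Finite.exists_maximalFor id _ hs ⟨T, hT, subset_rfl, hTS⟩
  refine ⟨U, ⟨hUs.1, hUs.2.2, ?_⟩, hUs.2.1⟩
  intro W hW hUW hWS
  have heq := @hmax W ⟨hW, hUs.2.1.trans hUW.1, hWS⟩ hUW.1
  simp only [id] at heq
  exact hUW.2 heq.ge

/-- A crossing edge of a child belongs to `EintF F S`. -/
lemma cross_mem_EintF {F : Set (Set V)} {inc : ε → Set V} {S T : Set V} {e : ε}
    (hlam : ∀ S ∈ F, ∀ T ∈ F, S ⊆ T ∨ T ⊆ S ∨ S ∩ T = ∅)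
    (hT : T ∈ childrenF F S) (he : e ∈ Eext inc T ∩ Eint inc S) :
    e ∈ EintF inc F S := by
  refine ⟨he.2, ?_⟩
  intro hmem
  simp only [Set.mem_iUnion, exists_prop] at hmem
  obtain ⟨T', hT', heT'⟩ := hmem
  have hint : (T ∩ T').Nonempty := by
    obtain ⟨x, hx⟩ := he.1.2
    exact ⟨x, hx.2, heT' hx.1⟩
  rcases hlam T hT.1 T' hT'.1 with h | h | h
  · rcases eq_or_ssubset_of_subset h with rfl | hss
    · exact he.1.1 heT'
    · exact hT.2.2 T' hT'.1 hss hT'.2.1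
  · exact he.1.1 (heT'.trans h)
  · exact hint.ne_empty h

/-- The projection onto safe forests is idempotent:
`P^n ∘ P^n = P^n` (for every scale assignment `n`). -/
theorem safeProj_idempotent [Finite ε] (inc : ε → Set V) (n : ε → ℕ)
    (F : Set (Set V)) (hFfin : F.Finite)
    (hlam : ∀ S ∈ F, ∀ T ∈ F, S ⊆ T ∨ T ⊆ S ∨ S ∩ T = ∅)
    (hcross : ∀ S ∈ F, ∀ T ∈ F, S ⊂ T → (Eext inc S ∩ Eint inc T).Nonempty)
    (hext : ∀ S ∈ F, (Eext inc S).Nonempty) :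
    safeProj inc n (safeProj inc n F) = safeProj inc n F := by
  set F' := safeProj inc n F with hF'def
  have hF'sub : F' ⊆ F := fun S hS => hS.1
  apply Set.Subset.antisymm (fun S hS => hS.1)
  intro S hS
  have hSF : S ∈ F := hF'sub hS
  refine ⟨hS, ?_⟩
  -- `EextF` grows when passing to the subfamily `F'`.
  have hEext : EextF inc F S ⊆ EextF inc F' S := by
    rintro e ⟨he1, he2⟩
    refine ⟨he1, ?_⟩
    simp only [Set.mem_iInter] at he2 ⊢
    exact fun T hT => he2 T ⟨hF'sub hT.1, hT.2⟩
  -- `EintF` grows when passing to the subfamily `F'`.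
  have hEint : EintF inc F S ⊆ EintF inc F' S := by
    rintro e ⟨he1, he2⟩
    refine ⟨he1, ?_⟩
    intro hmem
    simp only [Set.mem_iUnion, exists_prop] at hmem
    obtain ⟨T, hT, heT⟩ := hmem
    obtain ⟨U, hU, hTU⟩ := exists_child hFfin (hF'sub hT.1) hT.2.1
    refine he2 ?_
    simp only [Set.mem_iUnion, exists_prop]
    exact ⟨U, hU, fun x hx => hTU (heT hx)⟩
  -- external scales are monotone
  have hbdd : BddAbove (n '' EextF inc F' S) :=
    (Set.Finite.image n (Set.toFinite _)).bddAbove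
  have hextmono : extScale inc n F S ≤ extScale inc n F' S :=
    csSup_le_csSup' hbdd (Set.image_mono (f := n) hEext)
  rcases Set.eq_empty_or_nonempty (EintF inc F S) with hne | hne
  · -- degenerate case: `S` has no children and no internal edges at all
    have hnochild : ∀ T ∈ F, ¬ T ⊂ S := by
      intro T hT hTS
      obtain ⟨U, hU, -⟩ := exists_child hFfin hT hTS
      obtain ⟨e, he⟩ := hcross U hU.1 S hSF hU.2.1
      exact absurd (cross_mem_EintF hlam hU he) (hne ▸ Set.notMem_empty e)
    have hEintS : Eint inc S = ∅ := by
      rw [← hne]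
      refine (Set.diff_subset).antisymm' (Set.subset_diff.2 ⟨subset_rfl, ?_⟩)
      rw [Set.disjoint_iUnion₂_right]
      intro T hT
      exact absurd hT.2.1 (hnochild T hT.1)
    have : EintF inc F' S = ∅ :=
      Set.subset_empty_iff.1 (hEintS ▸ Set.diff_subset)
    simp [intScale, this]
  · -- generic case: chain of inequalities
    have h1 : intScale inc n F' S ≤ intScale inc n F S := by
      have hmem : intScale inc n F S ∈ n '' EintF inc F' S :=
        Set.image_mono (f := n) hEint (Nat.sInf_mem (hne.image n))
      exact Nat.sInf_le hmem
    exact h1.trans (hS.2.trans hextmono)
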